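/- Fix integers N > m ≥ d ≥ 1 and let φ : ℝ^N → ℝ be a polynomial of total degree at most d. Then for every Boolean input x* ∈ {0,1}^N of Hamming weight |x*| > m, |φ(x*)| ≤ 2^d · C(⌈|x*|/⌊m/d⌋⌉, d) · max_{x ∈ {0,1}^N, |x| ≤ m} |φ(x)|. -/

import Mathlib

open Finset MvPolynomial

private lemma neg_one_pow_sub_real {a b : ℕ} (h : b ≤ a) :
    (-1 : ℝ) ^ (a - b) = (-1) ^ a * (-1) ^ b := by
  obtain ⟨c, rfl⟩ := Nat.exists_eq_add_of_le h
  have h1 : b + c - b = c := by omega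
  have hb : (-1:ℝ) ^ b * (-1) ^ b = 1 := by
    rw [← pow_add, ← two_mul, pow_mul, neg_one_sq, one_pow]
  calc (-1:ℝ) ^ (b + c - b) = (-1) ^ c := by rw [h1]
    _ = ((-1:ℝ) ^ b * (-1) ^ b) * (-1) ^ c := by rw [hb, one_mul]
    _ = (-1) ^ (b + c) * (-1) ^ b := by rw [pow_add]; ring

private lemma alt_sum_choose (M' : ℕ) (K : ℕ) :
    ∑ j ∈ Finset.range (K + 1), (-1 : ℝ) ^ j * ((M' + 1).choose j : ℝ)
      = (-1) ^ K * (M'.choose K : ℝ) := by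
  induction K with
  | zero => simp
  | succ K ih =>
    rw [Finset.sum_range_succ, ih, Nat.choose_succ_succ M' K]
    push_cast
    rw [pow_succ]
    ring

private lemma eval_ind_monomial {n : ℕ} (T : Finset (Fin n)) (u : Fin n →₀ ℕ) (c : ℝ) :
    MvPolynomial.eval (fun i => if i ∈ T then (1:ℝ) else 0) (MvPolynomial.monomial u c)
      = if u.support ⊆ T then c else 0 := by
  rw [MvPolynomial.eval_monomial, Finsupp.prod]
  by_cases h : u.support ⊆ T
  · rw [if_pos h]
    have h2 : ∀ i ∈ u.support, (if i ∈ T then (1:ℝ) else 0) ^ u i = 1 := fun i hi => by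
      rw [if_pos (h hi), one_pow]
    rw [Finset.prod_congr rfl h2, Finset.prod_const_one, mul_one]
  · rw [if_neg h]
    obtain ⟨i, hi, hiT⟩ := Finset.not_subset.mp h
    rw [Finset.prod_eq_zero hi, mul_zero]
    rw [if_neg hiT]
    exact zero_pow (Finsupp.mem_support_iff.mp hi)

private lemma mobius_point {n d : ℕ} (A : Finset (Fin n)) (hA : A.card ≤ d) :
    ∑ S ∈ Finset.univ.filter (fun S : Finset (Fin n) => S.card ≤ d),
      ∑ T ∈ S.powerset, (-1:ℝ) ^ (S.card - T.card) * (if A ⊆ T then (1:ℝ) else 0) = 1 := by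
  have hinner : ∀ S : Finset (Fin n),
      ∑ T ∈ S.powerset, (-1:ℝ) ^ (S.card - T.card) * (if A ⊆ T then (1:ℝ) else 0)
        = if S = A then 1 else 0 := by
    intro S
    have h1 : ∑ T ∈ S.powerset, (-1:ℝ) ^ (S.card - T.card) * (if A ⊆ T then (1:ℝ) else 0)
        = ∑ T ∈ S.powerset.filter (fun T => A ⊆ T), (-1:ℝ) ^ (S.card - T.card) := by
      rw [Finset.sum_filter]
      refine Finset.sum_congr rfl fun T _ => ?_
      split <;> simp
    rw [h1]
    by_cases hAS : A ⊆ S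
    · have h2 : ∑ T ∈ S.powerset.filter (fun T => A ⊆ T), (-1:ℝ) ^ (S.card - T.card)
          = ∑ V ∈ (S \ A).powerset, (-1:ℝ) ^ ((S \ A).card - V.card) := by
        refine Finset.sum_nbij' (fun T => T \ A) (fun V => V ∪ A) ?_ ?_ ?_ ?_ ?_
        · intro T hT
          rw [Finset.mem_filter, Finset.mem_powerset] at hT
          exact Finset.mem_powerset.mpr (Finset.sdiff_subset_sdiff hT.1 le_rfl)
        · intro V hV
          rw [Finset.mem_powerset] at hV
          rw [Finset.mem_filter, Finset.mem_powerset]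
          exact ⟨Finset.union_subset (hV.trans Finset.sdiff_subset) hAS,
            Finset.subset_union_right⟩
        · intro T hT
          rw [Finset.mem_filter] at hT
          exact Finset.sdiff_union_of_subset hT.2
        · intro V hV
          rw [Finset.mem_powerset] at hV
          have hdisj : Disjoint V A :=
            Finset.disjoint_of_subset_left hV Finset.sdiff_disjoint
          show (V ∪ A) \ A = V
          rw [Finset.union_sdiff_cancel_right hdisj]
        · intro T hT
          rw [Finset.mem_filter, Finset.mem_powerset] at hT
          show (-1:ℝ) ^ (S.card - T.card) = (-1:ℝ) ^ ((S \ A).card - (T \ A).card)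
          congr 1
          have hc : (T \ A).card = T.card - A.card := Finset.card_sdiff_of_subset hT.2
          have hc2 : (S \ A).card = S.card - A.card := Finset.card_sdiff_of_subset hAS
          have h3 := Finset.card_le_card hT.1
          have h4 := Finset.card_le_card hT.2
          omega
      rw [h2]
      have h3 : ∀ V ∈ (S \ A).powerset,
          (-1:ℝ) ^ ((S \ A).card - V.card) = (-1:ℝ) ^ ((S \ A).card) * (-1) ^ V.card :=
        fun V hV => neg_one_pow_sub_real (Finset.card_le_card (Finset.mem_powerset.mp hV))
      rw [Finset.sum_congr rfl h3, ← Finset.mul_sum]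
      have h4 : ∑ V ∈ (S \ A).powerset, (-1:ℝ) ^ V.card
          = if S \ A = ∅ then 1 else 0 := by
        have h5 := Finset.sum_powerset_neg_one_pow_card (x := S \ A)
        have hcast : ((∑ V ∈ (S \ A).powerset, (-1:ℤ) ^ V.card : ℤ) : ℝ)
            = ∑ V ∈ (S \ A).powerset, (-1:ℝ) ^ V.card := by push_cast; rfl
        rw [← hcast, h5]
        split <;> simp
      rw [h4]
      by_cases hSA : S = A
      · subst hSA
        simp
      · rw [if_neg ?_, mul_zero, if_neg hSA]
        intro hempty
        exact hSA (Finset.Subset.antisymm (Finset.sdiff_eq_empty_iff_subset.mp hempty) hAS)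
    · have hemp : S.powerset.filter (fun T => A ⊆ T) = ∅ := by
        rw [Finset.filter_eq_empty_iff]
        intro T hT hAT
        exact hAS (hAT.trans (Finset.mem_powerset.mp hT))
      rw [hemp, Finset.sum_empty, if_neg (fun h => hAS (by rw [h]))]
  rw [Finset.sum_congr rfl (fun S _ => hinner S)]
  simp [hA]

private lemma repr_double {n d : ℕ} (ψ : MvPolynomial (Fin n) ℝ) (hdeg : ψ.totalDegree ≤ d) :
    MvPolynomial.eval (fun _ => (1:ℝ)) ψ =
      ∑ S ∈ Finset.univ.filter (fun S : Finset (Fin n) => S.card ≤ d),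
        ∑ T ∈ S.powerset, (-1:ℝ) ^ (S.card - T.card) *
          MvPolynomial.eval (fun i => if i ∈ T then (1:ℝ) else 0) ψ := by
  have hcard : ∀ u ∈ ψ.support, (u : Fin n →₀ ℕ).support.card ≤ d := by
    intro u hu
    have h1 : u.support.card ≤ u.sum fun _ e => e := by
      rw [Finsupp.sum]
      calc u.support.card = ∑ _i ∈ u.support, 1 := by rw [Finset.card_eq_sum_ones]
        _ ≤ ∑ i ∈ u.support, u i :=
          Finset.sum_le_sum fun i hi => Nat.one_le_iff_ne_zero.mpr (Finsupp.mem_support_iff.mp hi)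
    exact h1.trans ((MvPolynomial.le_totalDegree hu).trans hdeg)
  have heval : ∀ T : Finset (Fin n), MvPolynomial.eval (fun i => if i ∈ T then (1:ℝ) else 0) ψ
      = ∑ u ∈ ψ.support, (if u.support ⊆ T then MvPolynomial.coeff u ψ else 0) := by
    intro T
    conv_lhs => rw [ψ.as_sum]
    rw [map_sum]
    exact Finset.sum_congr rfl fun u _ => eval_ind_monomial T u _
  have hone : MvPolynomial.eval (fun _ => (1:ℝ)) ψ = ∑ u ∈ ψ.support, MvPolynomial.coeff u ψ := by
    conv_lhs => rw [ψ.as_sum]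
    rw [map_sum]
    refine Finset.sum_congr rfl fun u _ => ?_
    rw [MvPolynomial.eval_monomial, Finsupp.prod]
    simp
  rw [hone, Finset.sum_congr rfl
    (fun S _ => Finset.sum_congr rfl (fun T _ => by rw [heval T]))]
  simp_rw [Finset.mul_sum]
  rw [Finset.sum_congr rfl (fun S _ => Finset.sum_comm), Finset.sum_comm]
  refine Finset.sum_congr rfl fun u hu => ?_
  have hmp := mobius_point (d := d) u.support (hcard u hu)
  calc MvPolynomial.coeff u ψ
      = MvPolynomial.coeff u ψ *
        ∑ S ∈ Finset.univ.filter (fun S : Finset (Fin n) => S.card ≤ d),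
          ∑ T ∈ S.powerset, (-1:ℝ) ^ (S.card - T.card) *
            (if u.support ⊆ T then (1:ℝ) else 0) := by rw [hmp, mul_one]
    _ = ∑ S ∈ Finset.univ.filter (fun S : Finset (Fin n) => S.card ≤ d),
          ∑ T ∈ S.powerset, (-1:ℝ) ^ (S.card - T.card) *
            (if u.support ⊆ T then MvPolynomial.coeff u ψ else 0) := by
        rw [Finset.mul_sum]
        refine Finset.sum_congr rfl fun S _ => ?_
        rw [Finset.mul_sum]
        refine Finset.sum_congr rfl fun T _ => ?_
        split <;> ring

private lemma coef_sum {n d : ℕ} (hdn : d < n) (T : Finset (Fin n)) (hT : T.card ≤ d) :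
    ∑ S ∈ (Finset.univ.filter (fun S : Finset (Fin n) => S.card ≤ d)).filter
        (fun S => T ⊆ S), (-1:ℝ) ^ (S.card - T.card)
      = (-1) ^ (d - T.card) * ((n - T.card - 1).choose (d - T.card) : ℝ) := by
  have h2 : ∑ S ∈ (Finset.univ.filter (fun S : Finset (Fin n) => S.card ≤ d)).filter
        (fun S => T ⊆ S), (-1:ℝ) ^ (S.card - T.card)
      = ∑ W ∈ Tᶜ.powerset.filter (fun W => W.card ≤ d - T.card), (-1:ℝ) ^ W.card := by
    refine Finset.sum_nbij' (fun S => S \ T) (fun W => W ∪ T) ?_ ?_ ?_ ?_ ?_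
    · intro S hS
      simp only [Finset.mem_filter, Finset.mem_univ, true_and, Finset.mem_powerset] at hS ⊢
      refine ⟨fun i hi => ?_, ?_⟩
      · rw [Finset.mem_sdiff] at hi
        exact Finset.mem_compl.mpr hi.2
      · rw [Finset.card_sdiff_of_subset hS.2]
        omega
    · intro W hW
      simp only [Finset.mem_filter, Finset.mem_univ, true_and, Finset.mem_powerset] at hW ⊢
      have hdisj : Disjoint W T := by
        rw [Finset.disjoint_left]
        intro i hiW hiT
        exact (Finset.mem_compl.mp (hW.1 hiW)) hiT
      rw [Finset.card_union_of_disjoint hdisj]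
      exact ⟨by omega, Finset.subset_union_right⟩
    · intro S hS
      simp only [Finset.mem_filter] at hS
      show S \ T ∪ T = S
      exact Finset.sdiff_union_of_subset hS.2
    · intro W hW
      simp only [Finset.mem_filter, Finset.mem_powerset] at hW
      have hdisj : Disjoint W T := by
        rw [Finset.disjoint_left]
        intro i hiW hiT
        exact (Finset.mem_compl.mp (hW.1 hiW)) hiT
      show (W ∪ T) \ T = W
      rw [Finset.union_sdiff_cancel_right hdisj]
    · intro S hS
      simp only [Finset.mem_filter, Finset.mem_univ, true_and] at hS
      show (-1:ℝ) ^ (S.card - T.card) = (-1:ℝ) ^ ((S \ T).card)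
      rw [Finset.card_sdiff_of_subset hS.2]
  rw [h2]
  have hmaps : ∀ W ∈ Tᶜ.powerset.filter (fun W => W.card ≤ d - T.card),
      W.card ∈ Finset.range (d - T.card + 1) := by
    intro W hW
    simp only [Finset.mem_filter] at hW
    rw [Finset.mem_range]
    omega
  rw [← Finset.sum_fiberwise_of_maps_to hmaps]
  have h4 : ∀ j ∈ Finset.range (d - T.card + 1),
      (Tᶜ.powerset.filter (fun W => W.card ≤ d - T.card)).filter (fun W => W.card = j)
        = Finset.powersetCard j Tᶜ := by
    intro j hj
    rw [Finset.mem_range] at hj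
    ext W
    simp only [Finset.mem_filter, Finset.mem_powerset, Finset.mem_powersetCard]
    constructor
    · rintro ⟨⟨h1, _⟩, h3⟩; exact ⟨h1, h3⟩
    · rintro ⟨h1, h3⟩; exact ⟨⟨h1, by omega⟩, h3⟩
  have h5 : ∀ j ∈ Finset.range (d - T.card + 1),
      ∑ W ∈ (Tᶜ.powerset.filter (fun W => W.card ≤ d - T.card)).filter
          (fun W => W.card = j), (-1:ℝ) ^ W.card
        = (-1:ℝ) ^ j * ((n - T.card).choose j : ℝ) := by
    intro j hj
    rw [h4 j hj]
    have h6 : ∀ W ∈ Finset.powersetCard j Tᶜ, (-1:ℝ) ^ W.card = (-1:ℝ) ^ j := by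
      intro W hW
      rw [(Finset.mem_powersetCard.mp hW).2]
    rw [Finset.sum_congr rfl h6, Finset.sum_const, Finset.card_powersetCard,
      Finset.card_compl, Fintype.card_fin, nsmul_eq_mul]
    ring
  rw [Finset.sum_congr rfl h5]
  have hM : n - T.card = (n - T.card - 1) + 1 := by omega
  rw [hM]
  exact alt_sum_choose (n - T.card - 1) (d - T.card)

private lemma choose_sum_nat {n d : ℕ} (hdn : d < n) :
    (∑ T ∈ Finset.univ.filter (fun T : Finset (Fin n) => T.card ≤ d),
      (n - T.card - 1).choose (d - T.card)) ≤ 2 ^ d * n.choose d := by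
  have hmaps : ∀ T ∈ Finset.univ.filter (fun T : Finset (Fin n) => T.card ≤ d),
      T.card ∈ Finset.range (d + 1) := by
    intro T hT
    simp only [Finset.mem_filter] at hT
    rw [Finset.mem_range]; omega
  rw [← Finset.sum_fiberwise_of_maps_to hmaps]
  have h4 : ∀ j ∈ Finset.range (d + 1),
      ((Finset.univ.filter (fun T : Finset (Fin n) => T.card ≤ d)).filter
        (fun T => T.card = j)) = Finset.powersetCard j (Finset.univ : Finset (Fin n)) := by
    intro j hj
    rw [Finset.mem_range] at hj
    ext W
    simp only [Finset.mem_filter, Finset.mem_univ, true_and, Finset.mem_powersetCard,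
      Finset.subset_univ]
    omega
  calc ∑ j ∈ Finset.range (d + 1),
        ∑ T ∈ ((Finset.univ.filter (fun T : Finset (Fin n) => T.card ≤ d)).filter
          (fun T => T.card = j)), (n - T.card - 1).choose (d - T.card)
      = ∑ j ∈ Finset.range (d + 1), n.choose j * ((n - j - 1).choose (d - j)) := by
        refine Finset.sum_congr rfl fun j hj => ?_
        rw [h4 j hj]
        have h6 : ∀ T ∈ Finset.powersetCard j (Finset.univ : Finset (Fin n)),
            (n - T.card - 1).choose (d - T.card) = (n - j - 1).choose (d - j) := by
          intro T hT
          rw [(Finset.mem_powersetCard.mp hT).2]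
        rw [Finset.sum_congr rfl h6, Finset.sum_const, Finset.card_powersetCard,
          Finset.card_univ, Fintype.card_fin, smul_eq_mul]
    _ ≤ ∑ j ∈ Finset.range (d + 1), n.choose d * d.choose j := by
        refine Finset.sum_le_sum fun j hj => ?_
        rw [Finset.mem_range] at hj
        have hjd : j ≤ d := by omega
        calc n.choose j * (n - j - 1).choose (d - j)
            ≤ n.choose j * (n - j).choose (d - j) :=
              Nat.mul_le_mul_left _ (Nat.choose_le_choose _ (by omega))
          _ = n.choose d * d.choose j := (Nat.choose_mul (n := n) hjd).symm
    _ = 2 ^ d * n.choose d := by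
        rw [← Finset.mul_sum, Nat.sum_range_choose, mul_comm]

private lemma extrapolation_base {n d : ℕ} (hdn : d < n)
    (ψ : MvPolynomial (Fin n) ℝ) (hdeg : ψ.totalDegree ≤ d) (B : ℝ)
    (hB : ∀ T : Finset (Fin n), T.card ≤ d →
      |MvPolynomial.eval (fun i => if i ∈ T then (1:ℝ) else 0) ψ| ≤ B) :
    |MvPolynomial.eval (fun _ => (1:ℝ)) ψ| ≤ 2 ^ d * (n.choose d) * B := by
  have hB0 : 0 ≤ B := le_trans (abs_nonneg _) (hB ∅ (by simp))
  rw [repr_double ψ hdeg]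
  have hswap : ∑ S ∈ Finset.univ.filter (fun S : Finset (Fin n) => S.card ≤ d),
        ∑ T ∈ S.powerset, (-1:ℝ) ^ (S.card - T.card) *
          MvPolynomial.eval (fun i => if i ∈ T then (1:ℝ) else 0) ψ
      = ∑ T ∈ Finset.univ.filter (fun T : Finset (Fin n) => T.card ≤ d),
        ∑ S ∈ (Finset.univ.filter (fun S : Finset (Fin n) => S.card ≤ d)).filter
          (fun S => T ⊆ S), (-1:ℝ) ^ (S.card - T.card) *
          MvPolynomial.eval (fun i => if i ∈ T then (1:ℝ) else 0) ψ := by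
    refine Finset.sum_comm' ?_
    intro S T
    simp only [Finset.mem_filter, Finset.mem_univ, true_and, Finset.mem_powerset]
    constructor
    · rintro ⟨h1, h2⟩
      exact ⟨⟨h1, h2⟩, le_trans (Finset.card_le_card h2) h1⟩
    · rintro ⟨⟨h1, h2⟩, _⟩
      exact ⟨h1, h2⟩
  rw [hswap]
  have hfac : ∀ T ∈ Finset.univ.filter (fun T : Finset (Fin n) => T.card ≤ d),
      ∑ S ∈ (Finset.univ.filter (fun S : Finset (Fin n) => S.card ≤ d)).filter
          (fun S => T ⊆ S), (-1:ℝ) ^ (S.card - T.card) *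
          MvPolynomial.eval (fun i => if i ∈ T then (1:ℝ) else 0) ψ
        = ((-1:ℝ) ^ (d - T.card) * ((n - T.card - 1).choose (d - T.card) : ℝ)) *
          MvPolynomial.eval (fun i => if i ∈ T then (1:ℝ) else 0) ψ := by
    intro T hT
    rw [← Finset.sum_mul, coef_sum hdn T (Finset.mem_filter.mp hT).2]
  rw [Finset.sum_congr rfl hfac]
  calc |∑ T ∈ Finset.univ.filter (fun T : Finset (Fin n) => T.card ≤ d),
        ((-1:ℝ) ^ (d - T.card) * ((n - T.card - 1).choose (d - T.card) : ℝ)) *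
          MvPolynomial.eval (fun i => if i ∈ T then (1:ℝ) else 0) ψ|
      ≤ ∑ T ∈ Finset.univ.filter (fun T : Finset (Fin n) => T.card ≤ d),
        (((n - T.card - 1).choose (d - T.card) : ℝ)) * B := by
        refine (Finset.abs_sum_le_sum_abs _ _).trans (Finset.sum_le_sum fun T hT => ?_)
        rw [abs_mul, abs_mul, abs_pow, abs_neg, abs_one, one_pow, one_mul,
          Nat.abs_cast]
        exact mul_le_mul_of_nonneg_left (hB T (Finset.mem_filter.mp hT).2)
          (Nat.cast_nonneg _)
    _ = ((∑ T ∈ Finset.univ.filter (fun T : Finset (Fin n) => T.card ≤ d),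
          (n - T.card - 1).choose (d - T.card) : ℕ) : ℝ) * B := by
        rw [← Finset.sum_mul, Nat.cast_sum]
    _ ≤ (2 ^ d * n.choose d : ℕ) * B := by
        refine mul_le_mul_of_nonneg_right ?_ hB0
        exact_mod_cast choose_sum_nat hdn
    _ = 2 ^ d * (n.choose d) * B := by push_cast; ring

private lemma totalDegree_aeval_le' {N n : ℕ} (f : Fin N → MvPolynomial (Fin n) ℝ)
    (hf : ∀ i, (f i).totalDegree ≤ 1) (p : MvPolynomial (Fin N) ℝ) :
    (MvPolynomial.aeval f p).totalDegree ≤ p.totalDegree := by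
  conv_lhs => rw [p.as_sum]
  rw [map_sum]
  refine (MvPolynomial.totalDegree_finset_sum _ _).trans (Finset.sup_le fun u hu => ?_)
  rw [MvPolynomial.aeval_monomial]
  refine (MvPolynomial.totalDegree_mul _ _).trans ?_
  rw [MvPolynomial.algebraMap_eq, MvPolynomial.totalDegree_C, zero_add, Finsupp.prod]
  refine le_trans (MvPolynomial.totalDegree_finset_prod _ _) ?_
  refine le_trans (Finset.sum_le_sum (fun i (_ : i ∈ u.support) =>
    (MvPolynomial.totalDegree_pow _ _).trans
      (Nat.mul_le_mul_left (u i) (hf i)))) ?_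
  simp only [mul_one]
  have : ∑ i ∈ u.support, u i = u.sum fun _ e => e := by rw [Finsupp.sum]
  rw [this]
  exact MvPolynomial.le_totalDegree hu

private lemma eval_aeval_comp {N n : ℕ} (f : Fin N → MvPolynomial (Fin n) ℝ)
    (y : Fin n → ℝ) (p : MvPolynomial (Fin N) ℝ) :
    MvPolynomial.eval y (MvPolynomial.aeval f p)
      = MvPolynomial.eval (fun i => MvPolynomial.eval y (f i)) p := by
  rw [MvPolynomial.aeval_def, MvPolynomial.algebraMap_eq, ← MvPolynomial.eval_assoc]
  rfl

private lemma extrapolation_reduction {N m d : ℕ} (hd : 1 ≤ d) (hmd : d ≤ m)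
    (φ : MvPolynomial (Fin N) ℝ) (hdeg : φ.totalDegree ≤ d)
    (xstar : Fin N → Bool) (hx : m < (Finset.univ.filter (fun i => xstar i)).card)
    (B : ℝ)
    (hB : ∀ b : Fin N → Bool, (Finset.univ.filter (fun i => b i)).card ≤ m →
      |MvPolynomial.eval (fun i => if b i then (1 : ℝ) else 0) φ| ≤ B) :
    |MvPolynomial.eval (fun i => if xstar i then (1 : ℝ) else 0) φ| ≤
      2 ^ d * (Nat.choose
        (((Finset.univ.filter (fun i => xstar i)).card + (m / d) - 1) / (m / d)) d) * B := by
  classical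
  set S : Finset (Fin N) := Finset.univ.filter (fun i => xstar i) with hSdef
  set K : ℕ := S.card with hKdef
  set t : ℕ := m / d with htdef
  have htpos : 1 ≤ t := (Nat.one_le_div_iff hd).mpr hmd
  have hdt : d * t ≤ m := by rw [htdef, mul_comm]; exact Nat.div_mul_le_self m d
  set n : ℕ := (K + t - 1) / t with hndef
  have hKn : K ≤ n * t := by
    have h1 : K + t - 1 < n * t + t := by rw [hndef]; exact Nat.lt_div_mul_add htpos
    have hK1 : 1 ≤ K := le_trans (le_trans hd hmd) (le_of_lt hx)
    generalize n * t = w at h1 ⊢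
    omega
  have hdn : d < n := by
    have h2 : (d + 1) * t ≤ K + t - 1 := by
      have h3 : (d + 1) * t = d * t + t := by ring
      have hK1 : m + 1 ≤ K := hx
      rw [h3]
      generalize d * t = w at hdt ⊢
      omega
    have h4 := (Nat.le_div_iff_mul_le htpos).mpr h2
    omega
  have hnpos : 0 < n := lt_of_le_of_lt (Nat.zero_le d) hdn
  set g : Fin N → Fin n := fun i =>
    if h : i ∈ S then
      ⟨((S.orderIsoOfFin hKdef.symm).symm ⟨i, h⟩ : Fin K) / t,
        (Nat.div_lt_iff_lt_mul htpos).mpr (lt_of_lt_of_le (Fin.is_lt _) hKn)⟩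
    else ⟨0, hnpos⟩ with hgdef
  have hfiber : ∀ j : Fin n, (S.filter (fun i => g i = j)).card ≤ t := by
    intro j
    have hsub : ∀ i ∈ S.filter (fun i => g i = j),
        (fun i => if h : i ∈ S then ((S.orderIsoOfFin hKdef.symm).symm ⟨i, h⟩ : ℕ) else 0) i
          ∈ Finset.Ico ((j : ℕ) * t) ((j : ℕ) * t + t) := by
      intro i hi
      rw [Finset.mem_filter] at hi
      obtain ⟨hiS, hgi⟩ := hi
      simp only [dif_pos hiS]
      simp only [hgdef, dif_pos hiS] at hgi
      have hgv : ((S.orderIsoOfFin hKdef.symm).symm ⟨i, hiS⟩ : Fin K) / t = (j : ℕ) :=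
        congrArg Fin.val hgi
      rw [Finset.mem_Ico]
      constructor
      · calc (j:ℕ) * t = _ / t * t := by rw [hgv]
          _ ≤ _ := Nat.div_mul_le_self _ t
      · have h5 : (((S.orderIsoOfFin hKdef.symm).symm ⟨i, hiS⟩ : Fin K) : ℕ) < ((j:ℕ) + 1) * t := by
          rw [← Nat.div_lt_iff_lt_mul htpos, hgv]
          omega
        have h6 : ((j:ℕ) + 1) * t = (j:ℕ) * t + t := by ring
        omega
    refine le_trans (Finset.card_le_card_of_injOn _ hsub ?_) ?_
    · intro i1 h1 i2 h2 heq
      rw [Finset.mem_coe, Finset.mem_filter] at h1 h2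
      obtain ⟨h1S, _⟩ := h1
      obtain ⟨h2S, _⟩ := h2
      simp only [dif_pos h1S, dif_pos h2S] at heq
      have h7 := (S.orderIsoOfFin hKdef.symm).symm.injective (Fin.val_injective heq)
      exact congrArg Subtype.val h7
    · rw [Nat.card_Ico]
      omega
  set f : Fin N → MvPolynomial (Fin n) ℝ :=
    fun i => if xstar i then MvPolynomial.X (g i) else 0 with hfdef
  set ψ : MvPolynomial (Fin n) ℝ := MvPolynomial.aeval f φ with hψdef
  have hdegψ : ψ.totalDegree ≤ d := by
    refine le_trans (totalDegree_aeval_le' f ?_ φ) hdeg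
    intro i
    rw [hfdef]
    by_cases h : xstar i
    · simp only [if_pos h, MvPolynomial.totalDegree_X]
      exact le_rfl
    · simp [h]
  have hev : ∀ y : Fin n → ℝ, MvPolynomial.eval y ψ
      = MvPolynomial.eval (fun i => if xstar i then y (g i) else 0) φ := by
    intro y
    rw [hψdef, eval_aeval_comp]
    have hpt : (fun i => MvPolynomial.eval y (f i))
        = fun i => if xstar i then y (g i) else 0 := by
      funext i
      rw [hfdef]
      by_cases h : xstar i <;> simp [h]
    rw [hpt]
  have hB' : ∀ T : Finset (Fin n), T.card ≤ d →
      |MvPolynomial.eval (fun i => if i ∈ T then (1:ℝ) else 0) ψ| ≤ B := by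
    intro T hT
    rw [hev]
    set b : Fin N → Bool := fun i => xstar i && decide (g i ∈ T) with hbdef
    have hpt : (fun i => if xstar i then (if g i ∈ T then (1:ℝ) else 0) else 0)
        = fun i => if b i then (1:ℝ) else 0 := by
      funext i
      simp only [hbdef]
      by_cases h1 : xstar i <;> by_cases h2 : g i ∈ T <;> simp [h1, h2]
    rw [hpt]
    refine hB b ?_
    have hXS : Finset.univ.filter (fun i => (b i : Prop)) = S.filter (fun i => g i ∈ T) := by
      ext i
      simp only [hbdef, hSdef, Finset.mem_filter, Finset.mem_univ, true_and,
        Bool.and_eq_true, decide_eq_true_eq]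
    rw [hXS]
    have hmap : ∀ i ∈ S.filter (fun i => g i ∈ T), g i ∈ T :=
      fun i hi => (Finset.mem_filter.mp hi).2
    rw [Finset.card_eq_sum_card_fiberwise hmap]
    calc ∑ j ∈ T, ((S.filter (fun i => g i ∈ T)).filter (fun i => g i = j)).card
        ≤ ∑ _j ∈ T, t := by
          refine Finset.sum_le_sum fun j _ => ?_
          refine le_trans (Finset.card_le_card ?_) (hfiber j)
          intro i hi
          rw [Finset.mem_filter] at hi ⊢
          exact ⟨(Finset.mem_filter.mp hi.1).1, hi.2⟩
      _ = T.card * t := by rw [Finset.sum_const, smul_eq_mul]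
      _ ≤ d * t := Nat.mul_le_mul_right t hT
      _ ≤ m := hdt
  have hbase := extrapolation_base hdn ψ hdegψ B hB'
  have hfinal : MvPolynomial.eval (fun i => if xstar i then (1:ℝ) else 0) φ
      = MvPolynomial.eval (fun _ => (1:ℝ)) ψ := by
    rw [hev]
  rw [hfinal]
  exact hbase

theorem generalized_extrapolation_lemma (N m d : ℕ) (hd : 1 ≤ d) (hmd : d ≤ m) (hNm : m < N)
    (φ : MvPolynomial (Fin N) ℝ) (hdeg : φ.totalDegree ≤ d)
    (xstar : Fin N → Bool) (hx : m < (Finset.univ.filter (fun i => xstar i)).card) :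
    |MvPolynomial.eval (fun i => if xstar i then (1 : ℝ) else 0) φ| ≤
      2 ^ d *
        (Nat.choose
          (((Finset.univ.filter (fun i => xstar i)).card + (m / d) - 1) / (m / d)) d) *
        ((Finset.univ.filter
            (fun b : Fin N → Bool => (Finset.univ.filter (fun i => b i)).card ≤ m)).sup'
          ⟨fun _ => false, by simp⟩
          (fun b => |MvPolynomial.eval (fun i => if b i then (1 : ℝ) else 0) φ|)) := by
  refine extrapolation_reduction hd hmd φ hdeg xstar hx _ ?_
  intro b hb
  have hmem : b ∈ Finset.univ.filter
      (fun b : Fin N → Bool => (Finset.univ.filter (fun i => b i)).card ≤ m) :=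
    Finset.mem_filter.mpr ⟨Finset.mem_univ _, hb⟩
  have h1 := Finset.le_sup'
    (fun b => |MvPolynomial.eval (fun i => if b i then (1 : ℝ) else 0) φ|) hmem
  exact h1
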